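/- Fix s > 0 and let J(s,ℓ) = Φ(−ℓ/(2√s)) + exp(ℓ²(s−1)/2) Φ(ℓ(1/(2√s) − √s)). Then J(s,0⁺) = 1 and lim_{ℓ→∞} J(s,ℓ) = 0; consequently, for every α ∈ (0,1) there exists a unique ℓ^α(s) > 0 such that J(s, ℓ^α(s)) = α. -/

import Mathlib

open Real Set Filter Topology
open MeasureTheory

noncomputable def Phi (x : ℝ) : ℝ :=
  (Real.sqrt (2 * Real.pi))⁻¹ * ∫ y in Set.Iic x, Real.exp (-y ^ 2 / 2)

lemma gauss_eq : (fun y : ℝ => Real.exp (-y ^ 2 / 2)) = fun y => Real.exp (-(1/2 : ℝ) * y ^ 2) := by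
  funext y; ring_nf

lemma gauss_integrable : Integrable (fun y : ℝ => Real.exp (-y ^ 2 / 2)) := by
  rw [gauss_eq]; exact integrable_exp_neg_mul_sq (by norm_num)

lemma gauss_integral : ∫ y : ℝ, Real.exp (-y ^ 2 / 2) = Real.sqrt (2 * Real.pi) := by
  rw [gauss_eq, integral_gaussian]
  norm_num [mul_comm]

lemma sqrt2pi_pos : 0 < Real.sqrt (2 * Real.pi) :=
  Real.sqrt_pos.2 (by positivity)

lemma Phi_nonneg (x : ℝ) : 0 ≤ Phi x := by
  have : 0 ≤ ∫ y in Set.Iic x, Real.exp (-y ^ 2 / 2) :=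
    setIntegral_nonneg measurableSet_Iic (fun y _ => (Real.exp_pos _).le)
  have := sqrt2pi_pos
  unfold Phi; positivity

lemma Phi_le_one (x : ℝ) : Phi x ≤ 1 := by
  have h : ∫ y in Set.Iic x, Real.exp (-y ^ 2 / 2) ≤ ∫ y : ℝ, Real.exp (-y ^ 2 / 2) :=
    setIntegral_le_integral gauss_integrable
      (Filter.Eventually.of_forall fun y => (Real.exp_pos _).le)
  rw [gauss_integral] at h
  unfold Phi
  rw [inv_mul_le_iff₀ sqrt2pi_pos]
  linarith

lemma gauss_Iic_zero : ∫ y in Set.Iic (0:ℝ), Real.exp (-y ^ 2 / 2) = Real.sqrt (2 * Real.pi) / 2 := by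
  have hsplit : (∫ y in Set.Iic (0:ℝ), Real.exp (-y ^ 2 / 2)) + ∫ y in Set.Ioi (0:ℝ), Real.exp (-y ^ 2 / 2)
      = ∫ y : ℝ, Real.exp (-y ^ 2 / 2) := by
    rw [← setIntegral_union (by simp [Set.disjoint_left]) measurableSet_Ioi
      gauss_integrable.integrableOn gauss_integrable.integrableOn]
    simp [Set.Iic_union_Ioi]
  have hsym : (∫ y in Set.Iic (0:ℝ), Real.exp (-y ^ 2 / 2)) = ∫ y in Set.Ioi (0:ℝ), Real.exp (-y ^ 2 / 2) := by
    have := integral_comp_neg_Ioi (0:ℝ) (fun y => Real.exp (-y ^ 2 / 2))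
    simp only [neg_zero] at this
    rw [← this]
    congr 1; funext y; ring_nf
  rw [gauss_integral] at hsplit
  linarith [hsym, hsplit]

lemma Phi_zero : Phi 0 = 1/2 := by
  unfold Phi
  rw [gauss_Iic_zero]
  field_simp

lemma Phi_eq (x : ℝ) : Phi x = Phi 0 + (Real.sqrt (2 * Real.pi))⁻¹ * ∫ y in (0:ℝ)..x, Real.exp (-y ^ 2 / 2) := by
  unfold Phi
  rw [← intervalIntegral.integral_Iic_sub_Iic gauss_integrable.integrableOn gauss_integrable.integrableOn]
  ring

lemma hasDerivAt_Phi (x : ℝ) :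
    HasDerivAt Phi ((Real.sqrt (2 * Real.pi))⁻¹ * Real.exp (-x ^ 2 / 2)) x := by
  have hc : Continuous (fun y : ℝ => Real.exp (-y ^ 2 / 2)) := by continuity
  have h : HasDerivAt (fun u => ∫ y in (0:ℝ)..u, Real.exp (-y ^ 2 / 2)) (Real.exp (-x ^ 2 / 2)) x :=
    intervalIntegral.integral_hasDerivAt_right (gauss_integrable.intervalIntegrable)
      (hc.stronglyMeasurableAtFilter _ _) hc.continuousAt
  have h2 := (h.const_mul ((Real.sqrt (2 * Real.pi))⁻¹)).const_add (Phi 0)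
  refine HasDerivAt.congr_of_eventuallyEq h2 ?_
  filter_upwards with y
  rw [Phi_eq y]

lemma Phi_continuous : Continuous Phi :=
  continuous_iff_continuousAt.2 fun x => (hasDerivAt_Phi x).continuousAt

lemma Phi_le_exp (x : ℝ) (hx : x ≤ 0) : Phi x ≤ Real.exp (-x ^ 2 / 2) := by
  have hint : Integrable (fun y : ℝ => Real.exp (-(y - x) ^ 2 / 2)) := by
    simpa using gauss_integrable.comp_sub_right x
  have key : ∫ y in Set.Iic x, Real.exp (-y ^ 2 / 2)
      ≤ ∫ y : ℝ, Real.exp (-x ^ 2 / 2) * Real.exp (-(y - x) ^ 2 / 2) := by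
    refine le_trans (setIntegral_mono_on (g := fun y => Real.exp (-x ^ 2 / 2) * Real.exp (-(y - x) ^ 2 / 2)) gauss_integrable.integrableOn
      ((hint.const_mul _).integrableOn) measurableSet_Iic ?_) ?_
    · intro y hy
      rw [← Real.exp_add]
      apply Real.exp_le_exp.2
      have hyx : y ≤ x := hy
      nlinarith
    · refine setIntegral_le_integral (hint.const_mul _) ?_
      filter_upwards with y; positivity
  have htot : ∫ y : ℝ, Real.exp (-x ^ 2 / 2) * Real.exp (-(y - x) ^ 2 / 2)
      = Real.exp (-x ^ 2 / 2) * Real.sqrt (2 * Real.pi) := by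
    rw [MeasureTheory.integral_const_mul]
    congr 1
    have := MeasureTheory.integral_sub_right_eq_self (μ := volume)
      (fun y : ℝ => Real.exp (-y ^ 2 / 2)) x
    rw [this, gauss_integral]
  unfold Phi
  rw [inv_mul_le_iff₀ sqrt2pi_pos]
  rw [htot] at key
  linarith [key]

lemma xgauss_integrable : Integrable (fun y : ℝ => -y * Real.exp (-y ^ 2 / 2)) := by
  have := (integrable_mul_exp_neg_mul_sq (b := (1/2:ℝ)) (by norm_num)).neg
  refine this.congr ?_
  filter_upwards with y
  simp only [Pi.neg_apply]
  ring_nf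

lemma xgauss_integral (a : ℝ) :
    ∫ y in Set.Iic a, -y * Real.exp (-y ^ 2 / 2) = Real.exp (-a ^ 2 / 2) := by
  have hderiv : ∀ y ∈ Set.Iic a, HasDerivAt (fun y : ℝ => Real.exp (-y ^ 2 / 2))
      (-y * Real.exp (-y ^ 2 / 2)) y := by
    intro y _
    have h1 : HasDerivAt (fun y : ℝ => -y ^ 2 / 2) (-y) y := by
      have h0 : HasDerivAt (fun y : ℝ => y ^ 2) (2 * y) y := by
        simpa using (hasDerivAt_pow 2 y)
      have h2 : HasDerivAt (fun y : ℝ => -y ^ 2 / 2) (-(2 * y) / 2) y := (h0.neg).div_const 2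
      convert h2 using 1
      ring
    have h3 := h1.exp
    convert h3 using 1
    ring
  have htend : Tendsto (fun y : ℝ => Real.exp (-y ^ 2 / 2)) atBot (𝓝 0) := by
    apply Real.tendsto_exp_atBot.comp
    have h1 : Tendsto (fun y : ℝ => y ^ 2 / 2) atBot atTop := by
      apply Tendsto.atTop_div_const (by norm_num)
      have h2 : Tendsto (fun y : ℝ => y ^ 2) atTop atTop := tendsto_pow_atTop (by norm_num)
      have h3 := h2.comp tendsto_neg_atBot_atTop
      refine h3.congr fun y => by simp
    have h4 := tendsto_neg_atTop_atBot.comp h1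
    refine h4.congr fun y => by simp; ring
  have := MeasureTheory.integral_Iic_of_hasDerivAt_of_tendsto' hderiv
    xgauss_integrable.integrableOn htend
  rw [this]; ring

lemma Phi_mill {t : ℝ} (ht : 0 < t) :
    Phi (-t) ≤ (Real.sqrt (2 * Real.pi))⁻¹ * (Real.exp (-t ^ 2 / 2) / t) := by
  have key : ∫ y in Set.Iic (-t), Real.exp (-y ^ 2 / 2)
      ≤ ∫ y in Set.Iic (-t), (1/t) * (-y * Real.exp (-y ^ 2 / 2)) := by
    refine setIntegral_mono_on gauss_integrable.integrableOn
      ((xgauss_integrable.const_mul _).integrableOn) measurableSet_Iic ?_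
    intro y hy
    have hy' : y ≤ -t := hy
    have h1 : (1:ℝ) ≤ -y / t := (le_div_iff₀ ht).2 (by linarith)
    have h2 : (0:ℝ) < Real.exp (-y ^ 2 / 2) := Real.exp_pos _
    calc Real.exp (-y ^ 2 / 2) = 1 * Real.exp (-y ^ 2 / 2) := by ring
      _ ≤ (-y / t) * Real.exp (-y ^ 2 / 2) := by nlinarith
      _ = (1/t) * (-y * Real.exp (-y ^ 2 / 2)) := by ring
  rw [MeasureTheory.integral_const_mul, xgauss_integral] at key
  unfold Phi
  rw [inv_mul_le_iff₀ sqrt2pi_pos]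
  calc ∫ y in Set.Iic (-t), Real.exp (-y ^ 2 / 2) ≤ 1/t * Real.exp (-(-t) ^ 2 / 2) := key
    _ = Real.exp (-t^2/2) / t := by ring_nf
    _ ≤ Real.sqrt (2*Real.pi) * ((Real.sqrt (2*Real.pi))⁻¹ * (Real.exp (-t ^ 2 / 2) / t)) := by
        rw [← mul_assoc, mul_inv_cancel₀ (ne_of_gt sqrt2pi_pos), one_mul]


noncomputable def J (s ℓ : ℝ) : ℝ :=
  Phi (-ℓ / (2 * Real.sqrt s)) +
    Real.exp (ℓ ^ 2 * (s - 1) / 2) * Phi (ℓ * (1 / (2 * Real.sqrt s) - Real.sqrt s))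

noncomputable def Jd (s ℓ : ℝ) : ℝ :=
  (Real.sqrt (2 * Real.pi))⁻¹ * Real.exp (-(-ℓ / (2 * Real.sqrt s)) ^ 2 / 2) * (-1 / (2 * Real.sqrt s))
    + (Real.exp (ℓ ^ 2 * (s - 1) / 2) * ((2 * ℓ ^ 1 * (s - 1)) / 2)
        * Phi (ℓ * (1 / (2 * Real.sqrt s) - Real.sqrt s))
      + Real.exp (ℓ ^ 2 * (s - 1) / 2)
        * ((Real.sqrt (2 * Real.pi))⁻¹
            * Real.exp (-(ℓ * (1 / (2 * Real.sqrt s) - Real.sqrt s)) ^ 2 / 2)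
            * (1 / (2 * Real.sqrt s) - Real.sqrt s)))

lemma J_hasDerivAt (s : ℝ) (ℓ : ℝ) : HasDerivAt (J s) (Jd s ℓ) ℓ := by
  have h1 : HasDerivAt (fun ℓ : ℝ => -ℓ / (2 * Real.sqrt s)) (-1 / (2 * Real.sqrt s)) ℓ := by
    simpa using ((hasDerivAt_id ℓ).neg).div_const (2 * Real.sqrt s)
  have h1c := (hasDerivAt_Phi (-ℓ / (2 * Real.sqrt s))).comp ℓ h1
  have h2 : HasDerivAt (fun ℓ : ℝ => ℓ ^ 2 * (s - 1) / 2) ((2 * ℓ ^ 1 * (s - 1)) / 2) ℓ :=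
    ((hasDerivAt_pow 2 ℓ).mul_const (s - 1)).div_const 2
  have h2e := h2.exp
  have h3 : HasDerivAt (fun ℓ : ℝ => ℓ * (1 / (2 * Real.sqrt s) - Real.sqrt s))
      (1 / (2 * Real.sqrt s) - Real.sqrt s) ℓ :=
    hasDerivAt_mul_const _
  have h3c := (hasDerivAt_Phi (ℓ * (1 / (2 * Real.sqrt s) - Real.sqrt s))).comp ℓ h3
  have h := h1c.add (h2e.mul h3c)
  simp only [Function.comp_def] at h
  exact h

lemma Jd_neg (s : ℝ) (hs : 0 < s) (ℓ : ℝ) (hℓ : 0 < ℓ) : Jd s ℓ < 0 := by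
  have hss : 0 < Real.sqrt s := Real.sqrt_pos.2 hs
  have hs2 : Real.sqrt s * Real.sqrt s = s := Real.mul_self_sqrt hs.le
  have hsq : (2 * Real.sqrt s) ^ 2 = 4 * s := by
    rw [mul_pow, Real.sq_sqrt hs.le]; norm_num
  have hP : 0 < (Real.sqrt (2 * Real.pi))⁻¹ := inv_pos.2 sqrt2pi_pos
  set P := (Real.sqrt (2 * Real.pi))⁻¹ with hPdef
  set g := Real.exp (-ℓ ^ 2 / (8 * s)) with hgdef
  have hg : 0 < g := Real.exp_pos _
  set E := Real.exp (ℓ ^ 2 * (s - 1) / 2) with hEdef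
  have hE : 0 < E := Real.exp_pos _
  set c := 1 / (2 * Real.sqrt s) - Real.sqrt s with hcdef
  have hc2 : c ^ 2 = 1 / (4 * s) - 1 + s := by
    rw [hcdef, sub_sq, div_pow, one_pow, hsq, Real.sq_sqrt hs.le]
    have h1 : 2 * (1 / (2 * Real.sqrt s)) * Real.sqrt s = 1 := by
      field_simp
    rw [h1]
  have e1 : Real.exp (-(-ℓ / (2 * Real.sqrt s)) ^ 2 / 2) = g := by
    rw [hgdef]
    congr 1
    rw [div_pow, hsq, neg_sq]
    field_simp
    ring
  have e2 : E * Real.exp (-(ℓ * c) ^ 2 / 2) = g := by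
    rw [hEdef, hgdef, ← Real.exp_add]
    congr 1
    rw [mul_pow, hc2]
    field_simp
    ring
  set Φv := Phi (ℓ * c) with hΦdef
  have hΦ0 : 0 ≤ Φv := Phi_nonneg _
  have hgoal : Jd s ℓ = (s - 1) * (E * ℓ * Φv) - P * g * Real.sqrt s := by
    unfold Jd
    rw [e1]
    rw [show E * (P * Real.exp (-(ℓ * c) ^ 2 / 2) * c) = P * (E * Real.exp (-(ℓ * c) ^ 2 / 2)) * c by ring, e2]
    ring
  rw [hgoal]
  have hpos : 0 < P * g * Real.sqrt s := by positivity
  rcases le_or_gt s 1 with h1 | h1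
  · nlinarith [mul_nonneg (mul_nonneg hE.le hℓ.le) hΦ0]
  · have h2s : 0 < 2 * s - 1 := by linarith
    set t := ℓ * ((2 * s - 1) / (2 * Real.sqrt s)) with htdef
    have ht : 0 < t := by positivity
    have harg : ℓ * c = -t := by
      rw [hcdef, htdef]
      have key : (1:ℝ) / (2 * Real.sqrt s) - Real.sqrt s = -((2 * s - 1) / (2 * Real.sqrt s)) := by
        rw [neg_div', eq_div_iff (by positivity : (2:ℝ) * Real.sqrt s ≠ 0), sub_mul,
          one_div_mul_cancel (by positivity : (2:ℝ) * Real.sqrt s ≠ 0)]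
        nlinarith [hs2]
      rw [key]
      ring
    have hmill : Φv ≤ P * (Real.exp (-t ^ 2 / 2) / t) := by
      rw [hΦdef, harg]; exact Phi_mill ht
    have ht2 : Real.exp (-t ^ 2 / 2) = Real.exp (-(ℓ * c) ^ 2 / 2) := by
      rw [harg, neg_sq]
    have hEt : E * Real.exp (-t ^ 2 / 2) = g := by rw [ht2, e2]
    have h5 : (s - 1) * (E * ℓ * Φv) ≤ (s - 1) * (E * ℓ * (P * (Real.exp (-t ^ 2 / 2) / t))) := by
      exact mul_le_mul_of_nonneg_left
        (mul_le_mul_of_nonneg_left hmill (mul_nonneg hE.le hℓ.le)) (by linarith)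
    have h6 : (s - 1) * (E * ℓ * (P * (Real.exp (-t ^ 2 / 2) / t)))
        = (s - 1) * (2 * Real.sqrt s / (2 * s - 1)) * (P * g) := by
      rw [← hEt, htdef]
      field_simp
    have h7 : (s - 1) * (2 * Real.sqrt s / (2 * s - 1)) * (P * g) - P * g * Real.sqrt s
        = -(P * g * Real.sqrt s / (2 * s - 1)) := by
      have h2s' : 2 * s - 1 ≠ 0 := h2s.ne'
      have hinv : (2 * s - 1) * (2 * s - 1)⁻¹ = 1 := mul_inv_cancel₀ h2s'
      simp only [div_eq_mul_inv]
      linear_combination P * g * Real.sqrt s * hinv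
    have h8 : 0 < P * g * Real.sqrt s / (2 * s - 1) := by positivity
    linarith

lemma exp_neg_sq_tendsto (a : ℝ) (ha : a < 0) :
    Tendsto (fun ℓ : ℝ => Real.exp (a * ℓ ^ 2)) atTop (𝓝 0) := by
  apply Real.tendsto_exp_atBot.comp
  have h2 : Tendsto (fun ℓ : ℝ => ℓ ^ 2) atTop atTop := tendsto_pow_atTop (by norm_num)
  exact ((tendsto_const_mul_atBot_of_neg ha).mpr tendsto_id).comp h2

lemma J_zero (s : ℝ) : J s 0 = 1 := by
  simp [J, Phi_zero]
  norm_num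

lemma arg_sq (s ℓ : ℝ) (hs : 0 < s) : -(-ℓ / (2 * Real.sqrt s)) ^ 2 / 2 = -1 / (8 * s) * ℓ ^ 2 := by
  have hsq : (2 * Real.sqrt s) ^ 2 = 4 * s := by
    rw [mul_pow, Real.sq_sqrt hs.le]; norm_num
  rw [div_pow, hsq, neg_sq, neg_div, div_div, show (4:ℝ) * s * 2 = 8 * s by ring,
    neg_div, neg_mul, one_div_mul_eq_div]

lemma J_tendsto (s : ℝ) (hs : 0 < s) : Tendsto (fun ℓ => J s ℓ) atTop (𝓝 0) := by
  have hss : 0 < Real.sqrt s := Real.sqrt_pos.2 hs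
  have hs2 : Real.sqrt s * Real.sqrt s = s := Real.mul_self_sqrt hs.le
  have h1 : Tendsto (fun ℓ : ℝ => Phi (-ℓ / (2 * Real.sqrt s))) atTop (𝓝 0) := by
    refine tendsto_of_tendsto_of_tendsto_of_le_of_le' tendsto_const_nhds
      (exp_neg_sq_tendsto (-1 / (8 * s)) (by
        have h0 : (0:ℝ) < 1 / (8*s) := by positivity
        rw [neg_div]; linarith)) ?_ ?_
    · filter_upwards with ℓ using Phi_nonneg _
    · filter_upwards [eventually_ge_atTop (0:ℝ)] with ℓ hℓ
      have harg : -ℓ / (2 * Real.sqrt s) ≤ 0 := by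
        apply div_nonpos_of_nonpos_of_nonneg <;> [linarith; positivity]
      calc Phi (-ℓ / (2 * Real.sqrt s)) ≤ Real.exp (-(-ℓ / (2 * Real.sqrt s)) ^ 2 / 2) :=
            Phi_le_exp _ harg
        _ = Real.exp (-1 / (8 * s) * ℓ ^ 2) := by rw [arg_sq s ℓ hs]
  have h2 : Tendsto (fun ℓ : ℝ => Real.exp (ℓ ^ 2 * (s - 1) / 2)
      * Phi (ℓ * (1 / (2 * Real.sqrt s) - Real.sqrt s))) atTop (𝓝 0) := by
    set c := 1 / (2 * Real.sqrt s) - Real.sqrt s with hcdef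
    have hc2 : c ^ 2 = 1 / (4 * s) - 1 + s := by
      rw [hcdef, sub_sq, div_pow, one_pow, show (2 * Real.sqrt s) ^ 2 = 4 * s by
        rw [mul_pow, Real.sq_sqrt hs.le]; norm_num, Real.sq_sqrt hs.le]
      have h1 : 2 * (1 / (2 * Real.sqrt s)) * Real.sqrt s = 1 := by field_simp
      rw [h1]
    rcases le_or_gt (1/2 : ℝ) s with hhalf | hhalf
    · have hc : c ≤ 0 := by
        rw [hcdef, sub_nonpos, div_le_iff₀ (by positivity)]
        nlinarith
      refine tendsto_of_tendsto_of_tendsto_of_le_of_le' tendsto_const_nhds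
        (exp_neg_sq_tendsto (-1 / (8 * s)) (by
          have h0 : (0:ℝ) < 1 / (8*s) := by positivity
          rw [neg_div]; linarith)) ?_ ?_
      · filter_upwards with ℓ using mul_nonneg (Real.exp_pos _).le (Phi_nonneg _)
      · filter_upwards [eventually_ge_atTop (0:ℝ)] with ℓ hℓ
        have harg : ℓ * c ≤ 0 := mul_nonpos_of_nonneg_of_nonpos hℓ hc
        have hb := Phi_le_exp (ℓ * c) harg
        calc Real.exp (ℓ ^ 2 * (s - 1) / 2) * Phi (ℓ * c)
            ≤ Real.exp (ℓ ^ 2 * (s - 1) / 2) * Real.exp (-(ℓ * c) ^ 2 / 2) :=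
              mul_le_mul_of_nonneg_left hb (Real.exp_pos _).le
          _ = Real.exp (-1 / (8 * s) * ℓ ^ 2) := by
              rw [← Real.exp_add]
              congr 1
              rw [mul_pow, hc2]
              field_simp
              ring
    · refine tendsto_of_tendsto_of_tendsto_of_le_of_le' tendsto_const_nhds
        (exp_neg_sq_tendsto ((s - 1) / 2) (by linarith)) ?_ ?_
      · filter_upwards with ℓ using mul_nonneg (Real.exp_pos _).le (Phi_nonneg _)
      · filter_upwards with ℓ
        calc Real.exp (ℓ ^ 2 * (s - 1) / 2) * Phi (ℓ * c)
            ≤ Real.exp (ℓ ^ 2 * (s - 1) / 2) * 1 :=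
              mul_le_mul_of_nonneg_left (Phi_le_one _) (Real.exp_pos _).le
          _ = Real.exp ((s - 1) / 2 * ℓ ^ 2) := by rw [mul_one]; congr 1; ring
  have h3 := h1.add h2
  rw [show (0:ℝ) + 0 = 0 by ring] at h3
  exact h3.congr fun ℓ => rfl

/-- `J(s,0) = 1`, `lim_{ℓ→∞} J(s,ℓ) = 0`, and for every `α ∈ (0,1)` there is a unique `ℓ > 0`
with `J(s,ℓ) = α`. -/
theorem J_limits_and_unique_root (s : ℝ) (hs : 0 < s) :
    J s 0 = 1 ∧
    Tendsto (fun ℓ => J s ℓ) atTop (𝓝 0) ∧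
    ∀ α : ℝ, α ∈ Set.Ioo (0 : ℝ) 1 → ∃! ℓ : ℝ, 0 < ℓ ∧ J s ℓ = α := by
  have hJcont : Continuous (J s) := by
    apply Continuous.add
    · exact Phi_continuous.comp (by continuity)
    · exact (Real.continuous_exp.comp (by continuity)).mul (Phi_continuous.comp (by continuity))
  have hanti : StrictAntiOn (J s) (Set.Ici 0) := by
    apply strictAntiOn_of_deriv_neg (convex_Ici 0) hJcont.continuousOn
    intro x hx
    rw [interior_Ici] at hx
    rw [(J_hasDerivAt s x).deriv]
    exact Jd_neg s hs x hx
  refine ⟨J_zero s, J_tendsto s hs, ?_⟩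
  rintro α ⟨hα0, hα1⟩
  obtain ⟨M, hJM, hM1⟩ :=
    (((J_tendsto s hs).eventually_lt_const hα0).and (eventually_ge_atTop (1:ℝ))).exists
  have h0M : (0:ℝ) ≤ M := by linarith
  have hmem : α ∈ Set.Icc (J s M) (J s 0) := ⟨hJM.le, by rw [J_zero s]; linarith⟩
  obtain ⟨ℓ, hℓmem, hℓeq⟩ := intermediate_value_Icc' h0M hJcont.continuousOn hmem
  have hℓpos : 0 < ℓ := by
    rcases hℓmem.1.lt_or_eq with h | h
    · exact h
    · exfalso; rw [← h, J_zero s] at hℓeq; linarith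
  refine ⟨ℓ, ⟨hℓpos, hℓeq⟩, ?_⟩
  rintro ℓ' ⟨hp', he'⟩
  exact hanti.injOn (Set.mem_Ici.2 hp'.le) (Set.mem_Ici.2 hℓpos.le) (by rw [he', hℓeq])
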